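/- Let α ∈ [0,π/2], c₁, c₂, c₃ ∈ ℂ ⊂ ℍ, and t ≥ 0 real; set κ₁ = c₁ + t·j and κ₂ = c₂ + c₃·j, and assume Re(κ₁κ̄₂) ≤ 0, Re(κ₂) ≤ 0, κ₁ ≠ 0 and κ₂ ≠ 0. Define D = 1 + |κ₁|² + |κ₂|² − 2Re(κ₁) + 2Re(κ₂e^{−iα}) + 2Re(κ̄₁κ₂e^{iα}). Say the data is realizable in dimension n if there exist null vectors n₁, n₂, n₃, n₄ ∈ ℍ^{n+1} with ⟨n₁,n₂⟩ = ⟨n₂,n₃⟩ = ⟨n₃,n₄⟩ = 1, ⟨n₁,n₃⟩ = −e^{iα}, ⟨n₁,n₄⟩ = κ₁ and ⟨n₂,n₄⟩ = κ₂. Then: (a) for n = 2, the data is realizable if and only if D = 0; (b) for n > 2, the data is realizable if and only if D ≤ 0, and for any realizing quadruple n₁,…,n₄ one has D = 0 if and only if there exist λ₁, λ₂, λ₃, λ₄ ∈ ℍ, not all zero, with n₁λ₁ + n₂λ₂ + n₃λ₃ + n₄λ₄ = 0. -/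

import Mathlib

open scoped Quaternion

noncomputable section

/-- The quaternionic Hermitian form of signature (n,1) on ℍ^{n+1}:
`⟨z,w⟩ = w̄₁ z_{n+1} + Σ_{i=2}^n w̄ᵢ zᵢ + w̄_{n+1} z₁`. -/
noncomputable def herm {n : ℕ} (z w : Fin (n+1) → ℍ[ℝ]) : ℍ[ℝ] :=
  star (w 0) * z (Fin.last n)
    + ∑ i ∈ Finset.Ioo (0 : Fin (n+1)) (Fin.last n), star (w i) * z i
    + star (w (Fin.last n)) * z 0

/-- `w` is (right-)proportional to `z`: `w = zλ` for some `λ ∈ ℍ`. -/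
def Prp {n : ℕ} (z w : Fin (n+1) → ℍ[ℝ]) : Prop :=
  ∃ lam : ℍ[ℝ], w = fun i => z i * lam

/-- Right scalar multiplication on ℍ^{n+1}. -/
noncomputable def smulR {n : ℕ} (z : Fin (n+1) → ℍ[ℝ]) (lam : ℍ[ℝ]) :
    Fin (n+1) → ℍ[ℝ] := fun i => z i * lam

/-- The quaternionic triple product `⟨p₁,p₂,p₃⟩ = ⟨p₂,p₁⟩⟨p₃,p₂⟩⟨p₁,p₃⟩`. -/
noncomputable def tri {n : ℕ} (p₁ p₂ p₃ : Fin (n+1) → ℍ[ℝ]) : ℍ[ℝ] :=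
  herm p₂ p₁ * herm p₃ p₂ * herm p₁ p₃

/-- The quaternionic Cartan angular invariant
`𝔸(p₁,p₂,p₃) = arccos(Re(−⟨p₁,p₂,p₃⟩)/|⟨p₁,p₂,p₃⟩|)`. -/
noncomputable def cartan {n : ℕ} (p₁ p₂ p₃ : Fin (n+1) → ℍ[ℝ]) : ℝ :=
  Real.arccos ((-(tri p₁ p₂ p₃)).re / ‖tri p₁ p₂ p₃‖)

/-- The quaternionic cross-ratio `𝕏(p₁,p₂,p₃,p₄) = ⟨p₃,p₁⟩⟨p₃,p₂⟩⁻¹⟨p₄,p₂⟩⟨p₄,p₁⟩⁻¹`. -/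
noncomputable def crossX {n : ℕ} (p₁ p₂ p₃ p₄ : Fin (n+1) → ℍ[ℝ]) : ℍ[ℝ] :=
  herm p₃ p₁ * (herm p₃ p₂)⁻¹ * herm p₄ p₂ * (herm p₄ p₁)⁻¹

/-- The group Sp(n,1) of quaternionic matrices preserving the Hermitian form. -/
def SpGrp (n : ℕ) : Set (Matrix (Fin (n+1)) (Fin (n+1)) ℍ[ℝ]) :=
  {g | ∀ z w : Fin (n+1) → ℍ[ℝ], herm (g.mulVec z) (g.mulVec w) = herm z w}

/-- Similarity of quaternions: `b = μ a μ⁻¹` for some nonzero `μ`. -/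
def QSim (a b : ℍ[ℝ]) : Prop := ∃ mu : ℍ[ℝ], mu ≠ 0 ∧ b = mu * a * mu⁻¹

/-- The embedding `ℂ = ℝ ⊕ ℝi ⊂ ℍ`. -/
noncomputable def cq (c : ℂ) : ℍ[ℝ] := ⟨c.re, c.im, 0, 0⟩

/-- The imaginary unit `j ∈ ℍ`. -/
noncomputable def jj : ℍ[ℝ] := ⟨0, 0, 1, 0⟩

/-- `e^{iα} = cos α + i sin α ∈ ℍ`. -/
noncomputable def eI (α : ℝ) : ℍ[ℝ] := ⟨Real.cos α, Real.sin α, 0, 0⟩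

/-- The data `(α, κ₁, κ₂)` is realizable in dimension `n`: there is a quadruple of null
vectors in `ℍ^{n+1}` whose normalised Gram matrix has the prescribed entries. -/
def Realizable (n : ℕ) (α : ℝ) (κ₁ κ₂ : ℍ[ℝ]) : Prop :=
  ∃ m : Fin 4 → Fin (n+1) → ℍ[ℝ],
    (∀ i, m i ≠ 0) ∧ (∀ i, herm (m i) (m i) = 0) ∧
    herm (m 0) (m 1) = 1 ∧ herm (m 1) (m 2) = 1 ∧ herm (m 2) (m 3) = 1 ∧
    herm (m 0) (m 2) = -(eI α) ∧ herm (m 0) (m 3) = κ₁ ∧ herm (m 1) (m 3) = κ₂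

namespace S18

variable {n : ℕ}

lemma herm_star (z w : Fin (n+1) → ℍ[ℝ]) : herm w z = star (herm z w) := by
  simp only [herm, star_add, star_mul, star_star, star_sum]
  abel

lemma herm_pc_left (u v w : Fin (n+1) → ℍ[ℝ]) (c d : ℍ[ℝ]) :
    herm (fun x => u x * c + v x * d) w = herm u w * c + herm v w * d := by
  simp only [herm, mul_add, ← mul_assoc, Finset.sum_add_distrib, ← Finset.sum_mul, add_mul]
  abel

lemma herm_pc_right (z u v : Fin (n+1) → ℍ[ℝ]) (c d : ℍ[ℝ]) :
    herm z (fun x => u x * c + v x * d) = star c * herm z u + star d * herm z v := by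
  rw [herm_star, herm_pc_left]
  simp only [star_add, star_mul, ← herm_star]


lemma herm_qc_left (z0 z1 z2 z3 w : Fin (n+1) → ℍ[ℝ]) (c0 c1 c2 c3 : ℍ[ℝ]) :
    herm (fun x => z0 x * c0 + z1 x * c1 + z2 x * c2 + z3 x * c3) w
      = herm z0 w * c0 + herm z1 w * c1 + herm z2 w * c2 + herm z3 w * c3 := by
  simp only [herm, mul_add, ← mul_assoc, Finset.sum_add_distrib, ← Finset.sum_mul, add_mul]
  abel

lemma herm_qc_right (z z0 z1 z2 z3 : Fin (n+1) → ℍ[ℝ]) (c0 c1 c2 c3 : ℍ[ℝ]) :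
    herm z (fun x => z0 x * c0 + z1 x * c1 + z2 x * c2 + z3 x * c3)
      = star c0 * herm z z0 + star c1 * herm z z1 + star c2 * herm z z2 + star c3 * herm z z3 := by
  rw [herm_star, herm_qc_left]
  simp only [star_add, star_mul, ← herm_star]

lemma herm_self_re (z : Fin (n+1) → ℍ[ℝ]) :
    herm z z = (((herm z z).re : ℝ) : ℍ[ℝ]) :=
  Quaternion.star_eq_self.mp (herm_star z z).symm

lemma herm_first_zero (z : Fin (n+1) → ℍ[ℝ]) (h : z 0 = 0) :
    herm z z = ((∑ i ∈ Finset.Ioo (0:Fin (n+1)) (Fin.last n), Quaternion.normSq (z i) : ℝ) : ℍ[ℝ]) := by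
  have : ∀ i ∈ Finset.Ioo (0:Fin (n+1)) (Fin.last n), star (z i) * z i
      = ((Quaternion.normSq (z i) : ℝ) : ℍ[ℝ]) := fun i _ => Quaternion.star_mul_self (z i)
  rw [herm, h, Finset.sum_congr rfl this]
  rw [← Quaternion.algebraMap_def, map_sum]
  simp

lemma re_nonneg_first_zero (z : Fin (n+1) → ℍ[ℝ]) (h : z 0 = 0) : 0 ≤ (herm z z).re := by
  rw [herm_first_zero z h, Quaternion.re_coe]
  exact Finset.sum_nonneg fun i _ => Quaternion.normSq_nonneg

lemma mid_zero_of_null (z : Fin (n+1) → ℍ[ℝ]) (h : z 0 = 0) (hz : herm z z = 0)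
    (x : Fin (n+1)) (hx : x ≠ Fin.last n) : z x = 0 := by
  rcases eq_or_ne x 0 with rfl | hx0
  · exact h
  · have hmem : x ∈ Finset.Ioo (0:Fin (n+1)) (Fin.last n) :=
      Finset.mem_Ioo.mpr ⟨Fin.pos_of_ne_zero hx0, lt_of_le_of_ne (Fin.le_last x) hx⟩
    have hsum : (∑ i ∈ Finset.Ioo (0:Fin (n+1)) (Fin.last n), Quaternion.normSq (z i)) = 0 := by
      have := herm_first_zero z h
      rw [hz] at this
      exact_mod_cast congrArg QuaternionAlgebra.re this.symm |>.trans (by simp)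
    have := (Finset.sum_eq_zero_iff_of_nonneg (fun i _ => Quaternion.normSq_nonneg)).mp hsum x hmem
    exact Quaternion.normSq_eq_zero.mp this

lemma herm_left_last (hn : 0 < n) (z w : Fin (n+1) → ℍ[ℝ])
    (hz : ∀ x, x ≠ Fin.last n → z x = 0) :
    herm z w = star (w 0) * z (Fin.last n) := by
  have h0 : (0 : Fin (n+1)) ≠ Fin.last n := by
    simp [Fin.ext_iff, Fin.last]; omega
  rw [herm, hz 0 h0, Finset.sum_eq_zero, mul_zero]
  · abel
  · intro i hi
    rw [hz i (ne_of_lt (Finset.mem_Ioo.mp hi).2), mul_zero]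

lemma herm_right_last (hn : 0 < n) (z w : Fin (n+1) → ℍ[ℝ])
    (hw : ∀ x, x ≠ Fin.last n → w x = 0) :
    herm z w = star (w (Fin.last n)) * z 0 := by
  rw [herm_star, herm_left_last hn w z hw, star_mul, star_star]

lemma star_real_mul_re (r : ℝ) (c : ℍ[ℝ]) :
    (star c * ((r:ℍ[ℝ]) * c)).re = r * Quaternion.normSq c := by
  rw [← mul_assoc, ← Quaternion.coe_commutes, mul_assoc, Quaternion.star_mul_self,
    ← Quaternion.coe_mul, Quaternion.re_coe]

/-- Positive semidefiniteness on the orthocomplement of the hyperbolic pair `m1, m2`. -/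
lemma psd (hn : 0 < n) (m1 m2 : Fin (n+1) → ℍ[ℝ])
    (h11 : herm m1 m1 = 0) (h22 : herm m2 m2 = 0) (h12 : herm m1 m2 = 1)
    (z : Fin (n+1) → ℍ[ℝ]) (hz1 : herm z m1 = 0) (hz2 : herm z m2 = 0) :
    0 ≤ (herm z z).re := by
  by_contra hcon
  push_neg at hcon
  have h21 : herm m2 m1 = 1 := by rw [herm_star, h12, star_one]
  have hm1w : herm m1 (fun x => m1 x * 1 + m2 x * (-1)) = -1 := by
    rw [herm_pc_right, h11, h12]; simp
  have hm2w : herm m2 (fun x => m1 x * 1 + m2 x * (-1)) = 1 := by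
    rw [herm_pc_right, h21, h22]; simp
  have hww : herm (fun x => m1 x * 1 + m2 x * (-1)) (fun x => m1 x * 1 + m2 x * (-1)) = -2 := by
    rw [herm_pc_left, hm1w, hm2w]; noncomm_ring; simp
  have hzw : herm z (fun x => m1 x * 1 + m2 x * (-1)) = 0 := by
    rw [herm_pc_right, hz1, hz2]; simp
  have hwz : herm (fun x => m1 x * 1 + m2 x * (-1)) z = 0 := by
    rw [herm_star, hzw, star_zero]
  have hre2 : ((-2 : ℍ[ℝ])).re = -2 := by
    have : ((-2:ℝ) : ℍ[ℝ]) = (-2 : ℍ[ℝ]) := by norm_cast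
    rw [← this, Quaternion.re_coe]
  rcases eq_or_ne (m1 0 * 1 + m2 0 * (-1)) 0 with hw0 | hw0
  · have h := re_nonneg_first_zero (fun x => m1 x * 1 + m2 x * (-1)) hw0
    rw [hww, hre2] at h
    norm_num at h
  · have hp0 : z 0 * 1 + (m1 0 * 1 + m2 0 * (-1)) * (-((m1 0 * 1 + m2 0 * (-1))⁻¹ * z 0)) = 0 := by
      rw [mul_neg, ← mul_assoc, mul_inv_cancel₀ hw0]
      noncomm_ring
    have hzp : herm z (fun x => z x * 1 + (m1 x * 1 + m2 x * (-1))
          * (-((m1 0 * 1 + m2 0 * (-1))⁻¹ * z 0))) = herm z z := by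
      rw [herm_pc_right, hzw]; simp
    have hwp : herm (fun x => m1 x * 1 + m2 x * (-1)) (fun x => z x * 1 + (m1 x * 1 + m2 x * (-1))
          * (-((m1 0 * 1 + m2 0 * (-1))⁻¹ * z 0)))
        = star (-((m1 0 * 1 + m2 0 * (-1))⁻¹ * z 0)) * (-2) := by
      rw [herm_pc_right, hwz, hww]; simp
    have hpp : herm (fun x => z x * 1 + (m1 x * 1 + m2 x * (-1))
          * (-((m1 0 * 1 + m2 0 * (-1))⁻¹ * z 0)))
        (fun x => z x * 1 + (m1 x * 1 + m2 x * (-1))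
          * (-((m1 0 * 1 + m2 0 * (-1))⁻¹ * z 0)))
        = herm z z + star (-((m1 0 * 1 + m2 0 * (-1))⁻¹ * z 0))
            * (((-2:ℝ) : ℍ[ℝ]) * (-((m1 0 * 1 + m2 0 * (-1))⁻¹ * z 0))) := by
      rw [herm_pc_left, hzp, hwp]
      have : ((-2:ℝ) : ℍ[ℝ]) = (-2 : ℍ[ℝ]) := by norm_cast
      rw [this]
      noncomm_ring
    have hge := re_nonneg_first_zero (fun x => z x * 1 + (m1 x * 1 + m2 x * (-1))
          * (-((m1 0 * 1 + m2 0 * (-1))⁻¹ * z 0))) hp0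
    rw [hpp] at hge
    rw [Quaternion.re_add, star_real_mul_re] at hge
    have hnn : (0:ℝ) ≤ Quaternion.normSq (-((m1 0 * 1 + m2 0 * (-1))⁻¹ * z 0)) :=
      Quaternion.normSq_nonneg
    nlinarith

/-- Definiteness on the orthocomplement of the hyperbolic pair `m1, m2`. -/
lemma definite (hn : 0 < n) (m1 m2 : Fin (n+1) → ℍ[ℝ])
    (h11 : herm m1 m1 = 0) (h22 : herm m2 m2 = 0) (h12 : herm m1 m2 = 1)
    (z : Fin (n+1) → ℍ[ℝ]) (hz1 : herm z m1 = 0) (hz2 : herm z m2 = 0)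
    (hzz : herm z z = 0) : z = 0 := by
  have hm1z : herm m1 z = 0 := by rw [herm_star, hz1, star_zero]
  rcases eq_or_ne (m1 0) 0 with hm10 | hm10
  · -- m1 is supported at the last coordinate
    have hm1supp : ∀ x, x ≠ Fin.last n → m1 x = 0 := mid_zero_of_null m1 hm10 h11
    have hm1last : m1 (Fin.last n) ≠ 0 := by
      intro h0
      have := herm_left_last hn m1 m2 hm1supp
      rw [h12, h0, mul_zero] at this
      exact one_ne_zero this
    have hz0 : z 0 = 0 := by
      have := herm_right_last hn z m1 hm1supp
      rw [hz1] at this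
      rcases mul_eq_zero.mp this.symm with h | h
      · exact absurd (star_eq_zero.mp h) hm1last
      · exact h
    have hzsupp : ∀ x, x ≠ Fin.last n → z x = 0 := mid_zero_of_null z hz0 hzz
    have hzlast : z (Fin.last n) = 0 := by
      have h2 := herm_left_last hn z m2 hzsupp
      rw [hz2] at h2
      rcases mul_eq_zero.mp h2.symm with h | h
      · exfalso
        have hm20 : m2 0 = 0 := star_eq_zero.mp h
        have := herm_left_last hn m1 m2 hm1supp
        rw [h12, hm20, star_zero, zero_mul] at this
        exact one_ne_zero this
      · exact h
    funext x
    rcases eq_or_ne x (Fin.last n) with rfl | hx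
    · exact hzlast
    · exact hzsupp x hx
  · -- eliminate the first coordinate of z using m1
    have hp0 : z 0 * 1 + m1 0 * (-((m1 0)⁻¹ * z 0)) = 0 := by
      rw [mul_neg, ← mul_assoc, mul_inv_cancel₀ hm10]
      noncomm_ring
    have hzp : herm z (fun x => z x * 1 + m1 x * (-((m1 0)⁻¹ * z 0))) = 0 := by
      rw [herm_pc_right, hzz, hz1]; simp
    have hm1p : herm m1 (fun x => z x * 1 + m1 x * (-((m1 0)⁻¹ * z 0))) = 0 := by
      rw [herm_pc_right, hm1z, h11]; simp
    have hpp : herm (fun x => z x * 1 + m1 x * (-((m1 0)⁻¹ * z 0)))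
        (fun x => z x * 1 + m1 x * (-((m1 0)⁻¹ * z 0))) = 0 := by
      rw [herm_pc_left, hzp, hm1p]; simp
    have hpm1 : herm (fun x => z x * 1 + m1 x * (-((m1 0)⁻¹ * z 0))) m1 = 0 := by
      rw [herm_pc_left, hz1, h11]; simp
    have hpsupp : ∀ x, x ≠ Fin.last n →
        z x * 1 + m1 x * (-((m1 0)⁻¹ * z 0)) = 0 :=
      mid_zero_of_null _ hp0 hpp
    have hplast : z (Fin.last n) * 1 + m1 (Fin.last n) * (-((m1 0)⁻¹ * z 0)) = 0 := by
      have := herm_left_last hn (fun x => z x * 1 + m1 x * (-((m1 0)⁻¹ * z 0))) m1 hpsupp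
      rw [hpm1] at this
      rcases mul_eq_zero.mp this.symm with h | h
      · exact absurd (star_eq_zero.mp h) hm10
      · exact h
    have hzeq : ∀ x, z x = m1 x * ((m1 0)⁻¹ * z 0) := by
      intro x
      rcases eq_or_ne x (Fin.last n) with rfl | hx
      · have := hplast; rw [mul_one, mul_neg] at this; linear_combination (norm := noncomm_ring) this
      · have := hpsupp x hx; rw [mul_one, mul_neg] at this; linear_combination (norm := noncomm_ring) this
    have hc : (m1 0)⁻¹ * z 0 = 0 := by
      have hze : z = fun x => m1 x * ((m1 0)⁻¹ * z 0) + m1 x * 0 := by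
        funext x; rw [mul_zero, add_zero]; exact hzeq x
      have := hz2
      rw [hze, herm_pc_left, h12] at this
      simpa using this
    funext x
    rw [hzeq x, hc, mul_zero]
    rfl

lemma herm_zero_left (w : Fin (n+1) → ℍ[ℝ]) : herm 0 w = 0 := by
  simp [herm]

attribute [local simp] Quaternion.re_mul Quaternion.imI_mul Quaternion.imJ_mul
  Quaternion.imK_mul Quaternion.normSq_def'

section CS
variable (hn : 0 < n) (m1 m2 : Fin (n+1) → ℍ[ℝ])
  (h11 : herm m1 m1 = 0) (h22 : herm m2 m2 = 0) (h12 : herm m1 m2 = 1)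
  (u v : Fin (n+1) → ℍ[ℝ])
  (hu1 : herm u m1 = 0) (hu2 : herm u m2 = 0)
  (hv1 : herm v m1 = 0) (hv2 : herm v m2 = 0)
  (A B : ℝ) (s : ℍ[ℝ])
  (hA : herm u u = ((A : ℝ) : ℍ[ℝ])) (hB : herm v v = ((B : ℝ) : ℍ[ℝ]))
  (hs : herm u v = s)

include hn h11 h22 h12 hu1 hu2 hv1 hv2 hA hB hs

lemma A_nonneg : 0 ≤ A := by
  have := psd hn m1 m2 h11 h22 h12 u hu1 hu2
  rwa [hA, Quaternion.re_coe] at this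

lemma u_zero_of_A_zero (hA0 : A = 0) : u = 0 := by
  apply definite hn m1 m2 h11 h22 h12 u hu1 hu2
  rw [hA, hA0]; norm_cast

lemma s_zero_of_A_zero (hA0 : A = 0) : s = 0 := by
  have hu0 := u_zero_of_A_zero hn m1 m2 h11 h22 h12 u v hu1 hu2 hv1 hv2 A B s hA hB hs hA0
  rw [← hs, hu0, herm_zero_left]

/-- Cauchy–Schwarz. -/
lemma csq : Quaternion.normSq s ≤ A * B := by
  have hA0 := A_nonneg hn m1 m2 h11 h22 h12 u v hu1 hu2 hv1 hv2 A B s hA hB hs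
  rcases eq_or_lt_of_le hA0 with hA0' | hApos
  · rw [s_zero_of_A_zero hn m1 m2 h11 h22 h12 u v hu1 hu2 hv1 hv2 A B s hA hB hs hA0'.symm]
    simp [← hA0']
  · set e : ℍ[ℝ] := A⁻¹ • star s with he
    have hvu : herm v u = star s := by rw [herm_star, hs]
    have h1 : herm v (fun x => v x * 1 + u x * (-e)) = ((B:ℝ):ℍ[ℝ]) + star (-e) * star s := by
      rw [herm_pc_right, hB, hvu]; simp
    have h2 : herm u (fun x => v x * 1 + u x * (-e)) = s + star (-e) * ((A:ℝ):ℍ[ℝ]) := by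
      rw [herm_pc_right, hs, hA]; simp
    have hzz : herm (fun x => v x * 1 + u x * (-e)) (fun x => v x * 1 + u x * (-e))
        = (((B:ℝ):ℍ[ℝ]) + star (-e) * star s) * 1 + (s + star (-e) * ((A:ℝ):ℍ[ℝ])) * (-e) := by
      rw [herm_pc_left, h1, h2]
    have hz1' : herm (fun x => v x * 1 + u x * (-e)) m1 = 0 := by
      rw [herm_pc_left, hv1, hu1]; simp
    have hz2' : herm (fun x => v x * 1 + u x * (-e)) m2 = 0 := by
      rw [herm_pc_left, hv2, hu2]; simp
    have hpos := psd hn m1 m2 h11 h22 h12 _ hz1' hz2'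
    rw [hzz] at hpos
    have hre : ((((B:ℝ):ℍ[ℝ]) + star (-e) * star s) * 1 + (s + star (-e) * ((A:ℝ):ℍ[ℝ])) * (-e)).re
        = B - A⁻¹ * Quaternion.normSq s := by
      rw [he]
      simp [Quaternion.re_smul, Quaternion.imI_smul, Quaternion.imJ_smul, Quaternion.imK_smul]
      field_simp
      ring
    rw [hre] at hpos
    rw [← sub_nonneg]
    have heq : A * B - Quaternion.normSq s = A * (B - A⁻¹ * Quaternion.normSq s) := by
      field_simp
    rw [heq]
    exact mul_nonneg hApos.le hpos


lemma dep_to_eq (c d : ℍ[ℝ]) (hcd : ¬(c = 0 ∧ d = 0))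
    (hrel : ∀ x, u x * c + v x * d = 0) : Quaternion.normSq s = A * B := by
  have hA0 := A_nonneg hn m1 m2 h11 h22 h12 u v hu1 hu2 hv1 hv2 A B s hA hB hs
  have hvu : herm v u = star s := by rw [herm_star, hs]
  have hzero : (fun x => u x * c + v x * d) = (0 : Fin (n+1) → ℍ[ℝ]) := funext hrel
  have eq1 : ((A:ℝ):ℍ[ℝ]) * c + star s * d = 0 := by
    have h := herm_pc_left u v u c d
    rw [hzero, herm_zero_left, hA, hvu] at h
    exact h.symm
  have eq2 : s * c + ((B:ℝ):ℍ[ℝ]) * d = 0 := by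
    have h := herm_pc_left u v v c d
    rw [hzero, herm_zero_left, hs, hB] at h
    exact h.symm
  rcases eq_or_lt_of_le hA0 with hA0' | hApos
  · rw [s_zero_of_A_zero hn m1 m2 h11 h22 h12 u v hu1 hu2 hv1 hv2 A B s hA hB hs hA0'.symm,
      ← hA0']
    simp
  · have hc : c = -(((A⁻¹:ℝ):ℍ[ℝ]) * (star s * d)) := by
      have h' : ((A:ℝ):ℍ[ℝ]) * c = -(star s * d) := by linear_combination (norm := noncomm_ring) eq1
      have : ((A⁻¹:ℝ):ℍ[ℝ]) * (((A:ℝ):ℍ[ℝ]) * c) = ((A⁻¹:ℝ):ℍ[ℝ]) * (-(star s * d)) := by rw [h']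
      rw [← mul_assoc, ← Quaternion.coe_mul, inv_mul_cancel₀ hApos.ne'] at this
      simpa using this
    rcases eq_or_ne d 0 with rfl | hd
    · exfalso
      apply hcd
      refine ⟨?_, rfl⟩
      rw [hc]; simp
    · have hss : s * star s = ((Quaternion.normSq s : ℝ) : ℍ[ℝ]) := Quaternion.self_mul_star s
      have haux : s * (((A⁻¹:ℝ):ℍ[ℝ]) * (star s * d))
          = ((A⁻¹:ℝ):ℍ[ℝ]) * (((Quaternion.normSq s : ℝ):ℍ[ℝ]) * d) := by
        rw [← mul_assoc s, ← Quaternion.coe_commutes, mul_assoc, ← mul_assoc s, hss]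
      have hcast : ((B - A⁻¹ * Quaternion.normSq s : ℝ):ℍ[ℝ])
          = ((B:ℝ):ℍ[ℝ]) - ((A⁻¹:ℝ):ℍ[ℝ]) * (((Quaternion.normSq s):ℝ):ℍ[ℝ]) := by
        push_cast
        ring
      have hkey : ((B - A⁻¹ * Quaternion.normSq s : ℝ):ℍ[ℝ]) * d = 0 := by
        rw [hc] at eq2
        rw [hcast]
        linear_combination (norm := noncomm_ring) eq2 + haux
      rcases mul_eq_zero.mp hkey with h | h
      · have hre : B - A⁻¹ * Quaternion.normSq s = 0 := by
          have h5 := congrArg QuaternionAlgebra.re h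
          rwa [Quaternion.re_coe, Quaternion.re_zero] at h5
        have h3 : A * (B - A⁻¹ * Quaternion.normSq s) = 0 := by rw [hre, mul_zero]
        rw [mul_sub, show A * (A⁻¹ * Quaternion.normSq s) = Quaternion.normSq s from by
          rw [← mul_assoc, mul_inv_cancel₀ hApos.ne', one_mul]] at h3
        linarith
      · exact absurd h hd

lemma eq_to_dep (heq : Quaternion.normSq s = A * B) :
    ∃ c d : ℍ[ℝ], ¬(c = 0 ∧ d = 0) ∧ ∀ x, u x * c + v x * d = 0 := by
  have hA0 := A_nonneg hn m1 m2 h11 h22 h12 u v hu1 hu2 hv1 hv2 A B s hA hB hs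
  rcases eq_or_lt_of_le hA0 with hA0' | hApos
  · have hu0 := u_zero_of_A_zero hn m1 m2 h11 h22 h12 u v hu1 hu2 hv1 hv2 A B s hA hB hs hA0'.symm
    refine ⟨1, 0, by simp, fun x => ?_⟩
    rw [congrFun hu0 x]; simp
  · set e : ℍ[ℝ] := A⁻¹ • star s with he
    have hvu : herm v u = star s := by rw [herm_star, hs]
    have h1 : herm v (fun x => v x * 1 + u x * (-e)) = ((B:ℝ):ℍ[ℝ]) + star (-e) * star s := by
      rw [herm_pc_right, hB, hvu]; simp
    have h2 : herm u (fun x => v x * 1 + u x * (-e)) = s + star (-e) * ((A:ℝ):ℍ[ℝ]) := by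
      rw [herm_pc_right, hs, hA]; simp
    have hzz : herm (fun x => v x * 1 + u x * (-e)) (fun x => v x * 1 + u x * (-e))
        = (((B:ℝ):ℍ[ℝ]) + star (-e) * star s) * 1 + (s + star (-e) * ((A:ℝ):ℍ[ℝ])) * (-e) := by
      rw [herm_pc_left, h1, h2]
    have hz1' : herm (fun x => v x * 1 + u x * (-e)) m1 = 0 := by
      rw [herm_pc_left, hv1, hu1]; simp
    have hz2' : herm (fun x => v x * 1 + u x * (-e)) m2 = 0 := by
      rw [herm_pc_left, hv2, hu2]; simp
    have hre : ((((B:ℝ):ℍ[ℝ]) + star (-e) * star s) * 1 + (s + star (-e) * ((A:ℝ):ℍ[ℝ])) * (-e)).re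
        = B - A⁻¹ * Quaternion.normSq s := by
      rw [he]
      simp [Quaternion.re_smul, Quaternion.imI_smul, Quaternion.imJ_smul, Quaternion.imK_smul]
      field_simp
      ring
    have hz0 : herm (fun x => v x * 1 + u x * (-e)) (fun x => v x * 1 + u x * (-e)) = 0 := by
      rw [herm_self_re, hzz, hre, heq, show B - A⁻¹ * (A * B) = 0 from by
        rw [← mul_assoc, inv_mul_cancel₀ hApos.ne', one_mul, sub_self]]
      norm_cast
    have hz := definite hn m1 m2 h11 h22 h12 _ hz1' hz2' hz0
    refine ⟨-e, 1, by simp, fun x => ?_⟩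
    have := congrFun hz x
    simp only [Pi.zero_apply] at this
    linear_combination (norm := noncomm_ring) this

end CS

section Quad
variable (hn : 0 < n) (m : Fin 4 → Fin (n+1) → ℍ[ℝ]) (ε κ₁ κ₂ : ℍ[ℝ])
  (hnull : ∀ i, herm (m i) (m i) = 0)
  (h01 : herm (m 0) (m 1) = 1) (h12 : herm (m 1) (m 2) = 1) (h23 : herm (m 2) (m 3) = 1)
  (h02 : herm (m 0) (m 2) = -ε) (h03 : herm (m 0) (m 3) = κ₁) (h13 : herm (m 1) (m 3) = κ₂)
  (A B : ℝ) (hA : ε + star ε = ((A:ℝ):ℍ[ℝ])) (hB : -κ₂ - star κ₂ = ((B:ℝ):ℍ[ℝ]))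

include hn hnull h01 h12 h23 h02 h03 h13 hA hB

omit hn hA hB in
lemma gram :
    herm (fun x => m 0 x * 1 + m 1 x * ε + m 2 x * (-1) + m 3 x * 0) (m 1) = 0 ∧
    herm (fun x => m 0 x * 1 + m 1 x * ε + m 2 x * (-1) + m 3 x * 0) (m 2) = 0 ∧
    herm (fun x => m 0 x * 0 + m 1 x * (-1) + m 2 x * (-(star κ₂)) + m 3 x * 1) (m 1) = 0 ∧
    herm (fun x => m 0 x * 0 + m 1 x * (-1) + m 2 x * (-(star κ₂)) + m 3 x * 1) (m 2) = 0 ∧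
    herm (fun x => m 0 x * 1 + m 1 x * ε + m 2 x * (-1) + m 3 x * 0)
      (fun x => m 0 x * 1 + m 1 x * ε + m 2 x * (-1) + m 3 x * 0) = ε + star ε ∧
    herm (fun x => m 0 x * 0 + m 1 x * (-1) + m 2 x * (-(star κ₂)) + m 3 x * 1)
      (fun x => m 0 x * 0 + m 1 x * (-1) + m 2 x * (-(star κ₂)) + m 3 x * 1) = -κ₂ - star κ₂ ∧
    herm (fun x => m 0 x * 1 + m 1 x * ε + m 2 x * (-1) + m 3 x * 0)
      (fun x => m 0 x * 0 + m 1 x * (-1) + m 2 x * (-(star κ₂)) + m 3 x * 1)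
      = κ₁ + κ₂ * ε - 1 := by
  have h10 : herm (m 1) (m 0) = 1 := by rw [herm_star, h01, star_one]
  have h20 : herm (m 2) (m 0) = -(star ε) := by rw [herm_star, h02, star_neg]
  have h21 : herm (m 2) (m 1) = 1 := by rw [herm_star, h12, star_one]
  have h30 : herm (m 3) (m 0) = star κ₁ := by rw [herm_star, h03]
  have h31 : herm (m 3) (m 1) = star κ₂ := by rw [herm_star, h13]
  have h32 : herm (m 3) (m 2) = 1 := by rw [herm_star, h23, star_one]
  have hu1 : herm (fun x => m 0 x * 1 + m 1 x * ε + m 2 x * (-1) + m 3 x * 0) (m 1) = 0 := by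
    rw [herm_qc_left, h01, hnull 1, h21, h31]; noncomm_ring
  have hu2 : herm (fun x => m 0 x * 1 + m 1 x * ε + m 2 x * (-1) + m 3 x * 0) (m 2) = 0 := by
    rw [herm_qc_left, h02, h12, hnull 2, h32]; noncomm_ring
  have hv1 : herm (fun x => m 0 x * 0 + m 1 x * (-1) + m 2 x * (-(star κ₂)) + m 3 x * 1) (m 1)
      = 0 := by
    rw [herm_qc_left, h01, hnull 1, h21, h31]; noncomm_ring
  have hv2 : herm (fun x => m 0 x * 0 + m 1 x * (-1) + m 2 x * (-(star κ₂)) + m 3 x * 1) (m 2)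
      = 0 := by
    rw [herm_qc_left, h02, h12, hnull 2, h32]; noncomm_ring
  have hu0 : herm (fun x => m 0 x * 1 + m 1 x * ε + m 2 x * (-1) + m 3 x * 0) (m 0)
      = ε + star ε := by
    rw [herm_qc_left, hnull 0, h10, h20, h30]; noncomm_ring
  have hu3 : herm (fun x => m 0 x * 1 + m 1 x * ε + m 2 x * (-1) + m 3 x * 0) (m 3)
      = κ₁ + κ₂ * ε - 1 := by
    rw [herm_qc_left, h03, h13, h23, hnull 3]; noncomm_ring
  have hv3 : herm (fun x => m 0 x * 0 + m 1 x * (-1) + m 2 x * (-(star κ₂)) + m 3 x * 1) (m 3)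
      = -κ₂ - star κ₂ := by
    rw [herm_qc_left, h03, h13, h23, hnull 3]; noncomm_ring
  refine ⟨hu1, hu2, hv1, hv2, ?_, ?_, ?_⟩
  · rw [herm_qc_right, hu0, hu1, hu2, hu3]
    simp only [star_one, star_zero, star_neg, one_mul, zero_mul, mul_zero, mul_one, add_zero,
      zero_add, neg_zero]
  · rw [herm_qc_right, hv1, hv2, hv3]
    simp only [star_one, star_zero, star_neg, one_mul, zero_mul, mul_zero, mul_one, add_zero,
      zero_add, neg_zero]
  · rw [herm_qc_right, hu1, hu2, hu3]
    simp only [star_one, star_zero, star_neg, one_mul, zero_mul, mul_zero, mul_one, add_zero,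
      zero_add, neg_zero]

lemma quad_csq : Quaternion.normSq (κ₁ + κ₂ * ε - 1) ≤ A * B := by
  obtain ⟨hu1, hu2, hv1, hv2, huu, hvv, huv⟩ :=
    gram m ε κ₁ κ₂ hnull h01 h12 h23 h02 h03 h13
  exact csq hn (m 1) (m 2) (hnull 1) (hnull 2) h12 _ _ hu1 hu2 hv1 hv2 A B _
    (huu.trans hA) (hvv.trans hB) huv

lemma quad_eq_iff_dep :
    (∃ lam : Fin 4 → ℍ[ℝ], lam ≠ 0 ∧ (fun x => ∑ i : Fin 4, m i x * lam i) = 0)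
      ↔ Quaternion.normSq (κ₁ + κ₂ * ε - 1) = A * B := by
  obtain ⟨hu1, hu2, hv1, hv2, huu, hvv, huv⟩ :=
    gram m ε κ₁ κ₂ hnull h01 h12 h23 h02 h03 h13
  constructor
  · rintro ⟨lam, hlam, hrel⟩
    have hrel' : ∀ x, m 0 x * lam 0 + m 1 x * lam 1 + m 2 x * lam 2 + m 3 x * lam 3 = 0 := by
      intro x
      have := congrFun hrel x
      simpa [Fin.sum_univ_four] using this
    have hzero : (fun x => m 0 x * lam 0 + m 1 x * lam 1 + m 2 x * lam 2 + m 3 x * lam 3)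
        = (0 : Fin (n+1) → ℍ[ℝ]) := funext hrel'
    have h21 : herm (m 2) (m 1) = 1 := by rw [herm_star, h12, star_one]
    have h31 : herm (m 3) (m 1) = star κ₂ := by rw [herm_star, h13]
    have h32 : herm (m 3) (m 2) = 1 := by rw [herm_star, h23, star_one]
    have e1 : lam 0 + lam 2 + star κ₂ * lam 3 = 0 := by
      have h := herm_qc_left (m 0) (m 1) (m 2) (m 3) (m 1) (lam 0) (lam 1) (lam 2) (lam 3)
      rw [hzero, herm_zero_left, h01, hnull 1, h21, h31] at h
      linear_combination (norm := noncomm_ring) -h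
    have e2 : -(ε * lam 0) + lam 1 + lam 3 = 0 := by
      have h := herm_qc_left (m 0) (m 1) (m 2) (m 3) (m 2) (lam 0) (lam 1) (lam 2) (lam 3)
      rw [hzero, herm_zero_left, h02, h12, hnull 2, h32] at h
      linear_combination (norm := noncomm_ring) -h
    have hcd : ¬(lam 0 = 0 ∧ lam 3 = 0) := by
      rintro ⟨hl0, hl3⟩
      apply hlam
      have hl1 : lam 1 = 0 := by
        have := e2; rw [hl0, hl3] at this; simpa using this
      have hl2 : lam 2 = 0 := by
        have := e1; rw [hl0, hl3] at this; simpa using this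
      funext i
      fin_cases i <;> simp [hl0, hl1, hl2, hl3]
    have hurel : ∀ x, (fun x => m 0 x * 1 + m 1 x * ε + m 2 x * (-1) + m 3 x * 0) x * lam 0
        + (fun x => m 0 x * 0 + m 1 x * (-1) + m 2 x * (-(star κ₂)) + m 3 x * 1) x * lam 3
        = 0 := by
      intro x
      simp only
      linear_combination (norm := noncomm_ring) (hrel' x) - (m 1 x) * e2 - (m 2 x) * e1
    exact dep_to_eq hn (m 1) (m 2) (hnull 1) (hnull 2) h12 _ _ hu1 hu2 hv1 hv2 A B _
      (huu.trans hA) (hvv.trans hB) huv (lam 0) (lam 3) hcd hurel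
  · intro heq
    obtain ⟨c, d, hcd, hrel⟩ := eq_to_dep hn (m 1) (m 2) (hnull 1) (hnull 2) h12 _ _
      hu1 hu2 hv1 hv2 A B _ (huu.trans hA) (hvv.trans hB) huv heq
    refine ⟨![c, ε * c - d, -(c + star κ₂ * d), d], ?_, ?_⟩
    · intro h0
      exact hcd ⟨congrFun h0 0, congrFun h0 3⟩
    · funext x
      have := hrel x
      simp only [Fin.sum_univ_four, Matrix.cons_val_zero, Matrix.cons_val_one, Matrix.head_cons,
        Matrix.cons_val_two, Matrix.cons_val_three, Matrix.tail_cons, Pi.zero_apply]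
      linear_combination (norm := noncomm_ring) this
end Quad



/-- A vector supported in coordinates `0, 1, 2, n`. -/
noncomputable def vec (n : ℕ) (a x1 x2 b : ℍ[ℝ]) : Fin (n+1) → ℍ[ℝ] :=
  fun i => if i.val = 0 then a else if i.val = n then b else
    if i.val = 1 then x1 else if i.val = 2 then x2 else 0

lemma vec_zero (a x1 x2 b : ℍ[ℝ]) : vec n a x1 x2 b 0 = a := by
  simp [vec]

lemma vec_last (hn : 0 < n) (a x1 x2 b : ℍ[ℝ]) : vec n a x1 x2 b (Fin.last n) = b := by
  show (if (Fin.last n).val = 0 then a else if (Fin.last n).val = n then b else _) = b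
  rw [Fin.val_last, if_neg (by omega), if_pos rfl]

lemma vec_one (hn : 1 < n) (a x1 x2 b : ℍ[ℝ]) :
    vec n a x1 x2 b ⟨1, by omega⟩ = x1 := by
  show (if _ then a else _) = x1
  rw [if_neg (by simp), if_neg (by simp; omega), if_pos rfl]

lemma vec_two (hn : 2 < n) (a x1 x2 b : ℍ[ℝ]) :
    vec n a x1 x2 b ⟨2, by omega⟩ = x2 := by
  show (if _ then a else _) = x2
  rw [if_neg (by simp), if_neg (by simp; omega), if_neg (by simp), if_pos rfl]

lemma herm_vec3 (a x1 x2 b a' x1' x2' b' : ℍ[ℝ]) :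
    herm (vec 2 a x1 x2 b) (vec 2 a' x1' x2' b')
      = star a' * b + star x1' * x1 + star b' * a := by
  rw [herm, show Finset.Ioo (0 : Fin 3) (Fin.last 2) = {1} from by decide,
    Finset.sum_singleton]
  rfl

lemma herm_vecN (hn : 2 < n) (a x1 x2 b a' x1' x2' b' : ℍ[ℝ]) :
    herm (vec n a x1 x2 b) (vec n a' x1' x2' b')
      = star a' * b + (star x1' * x1 + star x2' * x2) + star b' * a := by
  have h0n : 0 < n := by omega
  have h1mem : (⟨1, by omega⟩ : Fin (n+1)) ∈ Finset.Ioo (0 : Fin (n+1)) (Fin.last n) :=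
    Finset.mem_Ioo.mpr ⟨by rw [Fin.lt_def]; simp, by simp [Fin.lt_def]; omega⟩
  have h2mem : (⟨2, by omega⟩ : Fin (n+1)) ∈ Finset.Ioo (0 : Fin (n+1)) (Fin.last n) :=
    Finset.mem_Ioo.mpr ⟨by rw [Fin.lt_def]; simp, by simp [Fin.lt_def]; omega⟩
  have hne : (⟨1, by omega⟩ : Fin (n+1)) ≠ ⟨2, by omega⟩ := by simp
  have hsub : ({⟨1, by omega⟩, ⟨2, by omega⟩} : Finset (Fin (n+1)))
      ⊆ Finset.Ioo (0 : Fin (n+1)) (Fin.last n) := by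
    intro i hi
    rcases Finset.mem_insert.mp hi with rfl | hi
    · exact h1mem
    · rw [Finset.mem_singleton.mp hi]; exact h2mem
  have hz : ∀ i ∈ Finset.Ioo (0 : Fin (n+1)) (Fin.last n),
      i ∉ ({⟨1, by omega⟩, ⟨2, by omega⟩} : Finset (Fin (n+1))) →
      star (vec n a' x1' x2' b' i) * vec n a x1 x2 b i = 0 := by
    intro i hi hni
    obtain ⟨hi0, hin⟩ := Finset.mem_Ioo.mp hi
    simp only [Finset.mem_insert, Finset.mem_singleton, not_or] at hni
    have hv0 : i.val ≠ 0 := by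
      intro h; exact absurd (Fin.ext h : i = 0) (by rintro rfl; exact lt_irrefl _ hi0)
    have hvn : i.val ≠ n := by
      have := hin; rw [Fin.lt_def, Fin.val_last] at this; omega
    have hv1 : i.val ≠ 1 := fun h => hni.1 (Fin.ext h)
    have hv2 : i.val ≠ 2 := fun h => hni.2 (Fin.ext h)
    show star _ * (if i.val = 0 then a else _) = 0
    rw [if_neg hv0, if_neg hvn, if_neg hv1, if_neg hv2, mul_zero]
  rw [herm, ← Finset.sum_subset hsub hz, Finset.sum_pair hne,
    vec_zero, vec_zero, vec_last h0n, vec_last h0n,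
    vec_one (by omega), vec_one (by omega), vec_two hn, vec_two hn]

lemma coe_add_q (x y : ℝ) : ((x + y : ℝ):ℍ[ℝ]) = ((x:ℝ):ℍ[ℝ]) + ((y:ℝ):ℍ[ℝ]) := by push_cast; ring

lemma constructN (hn : 2 < n) (ε κ₁ κ₂ : ℍ[ℝ]) (A B : ℝ)
    (hA : star ε + ε = ((A:ℝ):ℍ[ℝ])) (hB : κ₂ + star κ₂ = ((-B:ℝ):ℍ[ℝ]))
    (x1 x2 y1 y2 : ℍ[ℝ])
    (hx : Quaternion.normSq x1 + Quaternion.normSq x2 = A)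
    (hy : Quaternion.normSq y1 + Quaternion.normSq y2 = B)
    (hP : star y1 * x1 + star y2 * x2 = κ₁ - 1 + κ₂ * ε) :
    ∃ m : Fin 4 → Fin (n+1) → ℍ[ℝ],
      (∀ i, m i ≠ 0) ∧ (∀ i, herm (m i) (m i) = 0) ∧
      herm (m 0) (m 1) = 1 ∧ herm (m 1) (m 2) = 1 ∧ herm (m 2) (m 3) = 1 ∧
      herm (m 0) (m 2) = -ε ∧ herm (m 0) (m 3) = κ₁ ∧ herm (m 1) (m 3) = κ₂ := by
  have h0n : (0:ℕ) < n := by omega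
  have hxq : ((Quaternion.normSq x1 : ℝ):ℍ[ℝ]) + ((Quaternion.normSq x2 : ℝ):ℍ[ℝ])
      = ((A:ℝ):ℍ[ℝ]) := by rw [← coe_add_q, hx]
  have hyq : ((Quaternion.normSq y1 : ℝ):ℍ[ℝ]) + ((Quaternion.normSq y2 : ℝ):ℍ[ℝ])
      = ((B:ℝ):ℍ[ℝ]) := by rw [← coe_add_q, hy]
  have hB' : κ₂ + star κ₂ = -((B:ℝ):ℍ[ℝ]) := by rw [hB]; push_cast; ring
  refine ⟨![vec n (-ε) x1 x2 1, vec n 1 0 0 0, vec n 0 0 0 1, vec n 1 y1 y2 (star κ₂)],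
    ?_, ?_, ?_, ?_, ?_, ?_, ?_, ?_⟩
  · intro i
    fin_cases i <;> intro h0
    · exact one_ne_zero (by rw [← vec_last h0n (-ε) x1 x2 1,
        show vec n (-ε) x1 x2 1 = 0 from h0]; rfl)
    · exact one_ne_zero (by rw [← vec_zero (n := n) 1 (0:ℍ[ℝ]) 0 0,
        show vec n 1 0 0 0 = 0 from h0]; rfl)
    · exact one_ne_zero (by rw [← vec_last h0n (0:ℍ[ℝ]) 0 0 1,
        show vec n 0 0 0 1 = 0 from h0]; rfl)
    · exact one_ne_zero (by rw [← vec_zero (n := n) 1 y1 y2 (star κ₂),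
        show vec n 1 y1 y2 (star κ₂) = 0 from h0]; rfl)
  · intro i
    fin_cases i
    · show herm (vec n (-ε) x1 x2 1) (vec n (-ε) x1 x2 1) = 0
      rw [herm_vecN hn, Quaternion.star_mul_self, Quaternion.star_mul_self]
      simp only [star_neg, star_one, star_star, one_mul, mul_one, Quaternion.coe_neg]
      linear_combination (norm := noncomm_ring) hxq - hA
    · show herm (vec n 1 0 0 0) (vec n 1 0 0 0) = 0
      rw [herm_vecN hn]; simp
    · show herm (vec n 0 0 0 1) (vec n 0 0 0 1) = 0
      rw [herm_vecN hn]; simp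
    · show herm (vec n 1 y1 y2 (star κ₂)) (vec n 1 y1 y2 (star κ₂)) = 0
      rw [herm_vecN hn, Quaternion.star_mul_self, Quaternion.star_mul_self]
      simp only [star_neg, star_one, star_star, one_mul, mul_one, Quaternion.coe_neg]
      linear_combination (norm := noncomm_ring) hyq + hB'
  · show herm (vec n (-ε) x1 x2 1) (vec n 1 0 0 0) = 1
    rw [herm_vecN hn]; simp
  · show herm (vec n 1 0 0 0) (vec n 0 0 0 1) = 1
    rw [herm_vecN hn]; simp
  · show herm (vec n 0 0 0 1) (vec n 1 y1 y2 (star κ₂)) = 1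
    rw [herm_vecN hn]; simp
  · show herm (vec n (-ε) x1 x2 1) (vec n 0 0 0 1) = -ε
    rw [herm_vecN hn]; simp
  · show herm (vec n (-ε) x1 x2 1) (vec n 1 y1 y2 (star κ₂)) = κ₁
    rw [herm_vecN hn]
    simp only [star_neg, star_one, star_star, one_mul, mul_one, Quaternion.coe_neg]
    linear_combination (norm := noncomm_ring) hP
  · show herm (vec n 1 0 0 0) (vec n 1 y1 y2 (star κ₂)) = κ₂
    rw [herm_vecN hn]; simp

lemma construct2 (ε κ₁ κ₂ : ℍ[ℝ]) (A B : ℝ)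
    (hA : star ε + ε = ((A:ℝ):ℍ[ℝ])) (hB : κ₂ + star κ₂ = ((-B:ℝ):ℍ[ℝ]))
    (x1 y1 : ℍ[ℝ])
    (hx : Quaternion.normSq x1 = A) (hy : Quaternion.normSq y1 = B)
    (hP : star y1 * x1 = κ₁ - 1 + κ₂ * ε) :
    ∃ m : Fin 4 → Fin 3 → ℍ[ℝ],
      (∀ i, m i ≠ 0) ∧ (∀ i, herm (m i) (m i) = 0) ∧
      herm (m 0) (m 1) = 1 ∧ herm (m 1) (m 2) = 1 ∧ herm (m 2) (m 3) = 1 ∧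
      herm (m 0) (m 2) = -ε ∧ herm (m 0) (m 3) = κ₁ ∧ herm (m 1) (m 3) = κ₂ := by
  have h0n : (0:ℕ) < 2 := by omega
  have hxq : ((Quaternion.normSq x1 : ℝ):ℍ[ℝ]) = ((A:ℝ):ℍ[ℝ]) := by rw [hx]
  have hyq : ((Quaternion.normSq y1 : ℝ):ℍ[ℝ]) = ((B:ℝ):ℍ[ℝ]) := by rw [hy]
  have hB' : κ₂ + star κ₂ = -((B:ℝ):ℍ[ℝ]) := by rw [hB]; push_cast; ring
  refine ⟨![vec 2 (-ε) x1 0 1, vec 2 1 0 0 0, vec 2 0 0 0 1, vec 2 1 y1 0 (star κ₂)],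
    ?_, ?_, ?_, ?_, ?_, ?_, ?_, ?_⟩
  · intro i
    fin_cases i <;> intro h0
    · exact one_ne_zero (by rw [← vec_last h0n (-ε) x1 0 1,
        show vec 2 (-ε) x1 0 1 = 0 from h0]; rfl)
    · exact one_ne_zero (by rw [← vec_zero (n := 2) 1 (0:ℍ[ℝ]) 0 0,
        show vec 2 1 0 0 0 = 0 from h0]; rfl)
    · exact one_ne_zero (by rw [← vec_last h0n (0:ℍ[ℝ]) 0 0 1,
        show vec 2 0 0 0 1 = 0 from h0]; rfl)
    · exact one_ne_zero (by rw [← vec_zero (n := 2) 1 y1 (0:ℍ[ℝ]) (star κ₂),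
        show vec 2 1 y1 0 (star κ₂) = 0 from h0]; rfl)
  · intro i
    fin_cases i
    · show herm (vec 2 (-ε) x1 0 1) (vec 2 (-ε) x1 0 1) = 0
      rw [herm_vec3, Quaternion.star_mul_self]
      simp only [star_neg, star_one, star_star, one_mul, mul_one, Quaternion.coe_neg]
      linear_combination (norm := noncomm_ring) hxq - hA
    · show herm (vec 2 1 0 0 0) (vec 2 1 0 0 0) = 0
      rw [herm_vec3]; simp
    · show herm (vec 2 0 0 0 1) (vec 2 0 0 0 1) = 0
      rw [herm_vec3]; simp
    · show herm (vec 2 1 y1 0 (star κ₂)) (vec 2 1 y1 0 (star κ₂)) = 0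
      rw [herm_vec3, Quaternion.star_mul_self]
      simp only [star_neg, star_one, star_star, one_mul, mul_one, Quaternion.coe_neg]
      linear_combination (norm := noncomm_ring) hyq + hB'
  · show herm (vec 2 (-ε) x1 0 1) (vec 2 1 0 0 0) = 1
    rw [herm_vec3]; simp
  · show herm (vec 2 1 0 0 0) (vec 2 0 0 0 1) = 1
    rw [herm_vec3]; simp
  · show herm (vec 2 0 0 0 1) (vec 2 1 y1 0 (star κ₂)) = 1
    rw [herm_vec3]; simp
  · show herm (vec 2 (-ε) x1 0 1) (vec 2 0 0 0 1) = -ε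
    rw [herm_vec3]; simp
  · show herm (vec 2 (-ε) x1 0 1) (vec 2 1 y1 0 (star κ₂)) = κ₁
    rw [herm_vec3]
    simp only [star_neg, star_one, star_star, one_mul, mul_one, Quaternion.coe_neg]
    linear_combination (norm := noncomm_ring) hP
  · show herm (vec 2 1 0 0 0) (vec 2 1 y1 0 (star κ₂)) = κ₂
    rw [herm_vec3]; simp


lemma eI_fact (α : ℝ) : star (eI α) + eI α = ((2*Real.cos α : ℝ):ℍ[ℝ]) := by
  ext <;> simp [Quaternion.re_coe, Quaternion.imI_coe, Quaternion.imJ_coe,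
    Quaternion.imK_coe] <;> simp [eI] <;> ring

lemma eI_fact' (α : ℝ) : eI α + star (eI α) = ((2*Real.cos α : ℝ):ℍ[ℝ]) := by
  rw [add_comm]; exact eI_fact α

lemma kappa_fact (κ₂ : ℍ[ℝ]) : κ₂ + star κ₂ = ((-(-2*κ₂.re) : ℝ):ℍ[ℝ]) := by
  rw [Quaternion.self_add_star']; norm_num

lemma kappa_fact' (κ₂ : ℍ[ℝ]) : -κ₂ - star κ₂ = (((-2*κ₂.re) : ℝ):ℍ[ℝ]) := by
  have := kappa_fact κ₂
  have h2 : -κ₂ - star κ₂ = -(κ₂ + star κ₂) := by noncomm_ring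
  rw [h2, this]
  push_cast
  rw [neg_neg]

lemma scalars_eq (A B : ℝ) (hA : 0 ≤ A) (hB : 0 ≤ B) (s : ℍ[ℝ])
    (h : Quaternion.normSq s = A * B) :
    ∃ x1 y1 : ℍ[ℝ], Quaternion.normSq x1 = A ∧ Quaternion.normSq y1 = B
      ∧ star y1 * x1 = s := by
  rcases eq_or_lt_of_le hA with hA0 | hApos
  · have hs : s = 0 := by
      rw [← Quaternion.normSq_eq_zero]
      nlinarith [Quaternion.normSq_nonneg (a := s)]
    exact ⟨0, ((Real.sqrt B : ℝ):ℍ[ℝ]), by simp [← hA0],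
      by rw [Quaternion.normSq_coe, Real.sq_sqrt hB], by simp [hs]⟩
  · refine ⟨((Real.sqrt A : ℝ):ℍ[ℝ]), star s * (((Real.sqrt A)⁻¹ : ℝ):ℍ[ℝ]), ?_, ?_, ?_⟩
    · rw [Quaternion.normSq_coe, Real.sq_sqrt hA]
    · rw [map_mul, Quaternion.normSq_star, Quaternion.normSq_coe, h]
      rw [inv_pow, Real.sq_sqrt hA]
      field_simp
    · rw [star_mul, star_star, Quaternion.star_coe, ← Quaternion.coe_commutes, ← mul_assoc,
        ← Quaternion.coe_mul, mul_inv_cancel₀ (Real.sqrt_ne_zero'.mpr hApos)]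
      simp

lemma scalars_le (A B : ℝ) (hA : 0 ≤ A) (hB : 0 ≤ B) (s : ℍ[ℝ])
    (h : Quaternion.normSq s ≤ A * B) :
    ∃ x1 x2 y1 y2 : ℍ[ℝ], Quaternion.normSq x1 + Quaternion.normSq x2 = A
      ∧ Quaternion.normSq y1 + Quaternion.normSq y2 = B
      ∧ star y1 * x1 + star y2 * x2 = s := by
  rcases eq_or_lt_of_le hA with hA0 | hApos
  · have hs : s = 0 := by
      rw [← Quaternion.normSq_eq_zero]
      nlinarith [Quaternion.normSq_nonneg (a := s)]
    exact ⟨0, 0, ((Real.sqrt B : ℝ):ℍ[ℝ]), 0, by simp [← hA0],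
      by simp [Quaternion.normSq_coe, Real.sq_sqrt hB], by simp [hs]⟩
  · have hkey : Quaternion.normSq s * A⁻¹ ≤ B := by
      rw [← mul_le_mul_iff_of_pos_right hApos]
      calc Quaternion.normSq s * A⁻¹ * A = Quaternion.normSq s := by field_simp
        _ ≤ A * B := h
        _ = B * A := by ring
    refine ⟨((Real.sqrt A : ℝ):ℍ[ℝ]), 0, star s * (((Real.sqrt A)⁻¹ : ℝ):ℍ[ℝ]),
      ((Real.sqrt (B - Quaternion.normSq s * A⁻¹) : ℝ):ℍ[ℝ]), ?_, ?_, ?_⟩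
    · simp [Quaternion.normSq_coe, Real.sq_sqrt hA]
    · rw [map_mul, Quaternion.normSq_star, Quaternion.normSq_coe, Quaternion.normSq_coe,
        inv_pow, Real.sq_sqrt hA, Real.sq_sqrt (by linarith : 0 ≤ B - Quaternion.normSq s * A⁻¹)]
      ring
    · rw [star_mul, star_star, Quaternion.star_coe, ← Quaternion.coe_commutes, ← mul_assoc,
        ← Quaternion.coe_mul, mul_inv_cancel₀ (Real.sqrt_ne_zero'.mpr hApos)]
      simp

lemma Dalg (α : ℝ) (κ₁ κ₂ : ℍ[ℝ]) :
    1 + ‖κ₁‖^2 + ‖κ₂‖^2 - 2*κ₁.re + 2*(κ₂ * eI (-α)).re + 2*(star κ₁ * κ₂ * eI α).re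
      = Quaternion.normSq (κ₁ + κ₂ * eI α - 1) - (2*Real.cos α)*(-2*κ₂.re) := by
  have h1 : ‖κ₁‖^2 = Quaternion.normSq κ₁ := by
    rw [sq, Quaternion.normSq_eq_norm_mul_self]
  have h2 : ‖κ₂‖^2 = Quaternion.normSq κ₂ := by
    rw [sq, Quaternion.normSq_eq_norm_mul_self]
  rw [h1, h2]
  simp only [Quaternion.normSq_def', Quaternion.re_mul, Quaternion.imI_mul, Quaternion.imJ_mul,
    Quaternion.imK_mul, Quaternion.re_add, Quaternion.imI_add, Quaternion.imJ_add,
    Quaternion.imK_add, Quaternion.re_sub, Quaternion.imI_sub, Quaternion.imJ_sub,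
    Quaternion.imK_sub, Quaternion.re_one, Quaternion.imI_one, Quaternion.imJ_one,
    Quaternion.imK_one, Quaternion.re_star, Quaternion.imI_star, Quaternion.imJ_star,
    Quaternion.imK_star]
  simp only [eI, Real.cos_neg, Real.sin_neg]
  nlinarith [Real.sin_sq_add_cos_sq α, sq_nonneg (Real.sin α), sq_nonneg (Real.cos α)]

lemma four_dep (m : Fin 4 → Fin 3 → ℍ[ℝ]) :
    ∃ lam : Fin 4 → ℍ[ℝ], lam ≠ 0 ∧ ∀ x, ∑ i : Fin 4, m i x * lam i = 0 := by
  have hnli : ¬ LinearIndependent ℍ[ℝ] (fun i => (fun x => star (m i x)) : Fin 4 → Fin 3 → ℍ[ℝ]) := by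
    intro hli
    have hcard := hli.fintype_card_le_finrank
    rw [Module.finrank_pi] at hcard
    simp [Fintype.card_fin] at hcard
  obtain ⟨g, hgsum, i, hgi⟩ := Fintype.not_linearIndependent_iff.mp hnli
  refine ⟨fun i => star (g i), ?_, ?_⟩
  · intro h0
    exact hgi (by simpa using congrFun h0 i)
  · intro x
    have := congrFun hgsum x
    simp only [Finset.sum_apply, Pi.smul_apply, smul_eq_mul, Pi.zero_apply] at this
    calc ∑ i : Fin 4, m i x * star (g i)
        = star (∑ i : Fin 4, g i * star (m i x)) := by
          rw [star_sum]; exact Finset.sum_congr rfl fun i _ => by rw [star_mul, star_star]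
      _ = 0 := by rw [this, star_zero]

end S18

/-- with `κ₁ = c₁ + t·j`, `κ₂ = c₂ + c₃·j` subject to the stated restrictions and
`D = 1 + |κ₁|² + |κ₂|² − 2Re κ₁ + 2Re(κ₂e^{−iα}) + 2Re(κ̄₁κ₂e^{iα})`:
(a) the data is realizable in dimension 2 iff `D = 0`; (b) for `n > 2` it is realizable iff
`D ≤ 0`, and for any realizing quadruple, `D = 0` iff the quadruple is right-linearly
dependent. -/
theorem stmt18 (α : ℝ) (hα : α ∈ Set.Icc 0 (Real.pi/2))
    (c₁ c₂ c₃ : ℂ) (t : ℝ) (ht : 0 ≤ t)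
    (κ₁ κ₂ : ℍ[ℝ])
    (hκ₁ : κ₁ = cq c₁ + ((t : ℝ) : ℍ[ℝ]) * jj) (hκ₂ : κ₂ = cq c₂ + cq c₃ * jj)
    (h1 : (κ₁ * star κ₂).re ≤ 0) (h2 : κ₂.re ≤ 0) (h3 : κ₁ ≠ 0) (h4 : κ₂ ≠ 0)
    (D : ℝ)
    (hD : D = 1 + ‖κ₁‖^2 + ‖κ₂‖^2 - 2 * κ₁.re
              + 2 * (κ₂ * eI (-α)).re + 2 * (star κ₁ * κ₂ * eI α).re) :
    (Realizable 2 α κ₁ κ₂ ↔ D = 0)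
    ∧ (∀ n : ℕ, 2 < n →
        ((Realizable n α κ₁ κ₂ ↔ D ≤ 0)
          ∧ ∀ m : Fin 4 → Fin (n+1) → ℍ[ℝ],
              ((∀ i, m i ≠ 0) ∧ (∀ i, herm (m i) (m i) = 0) ∧
               herm (m 0) (m 1) = 1 ∧ herm (m 1) (m 2) = 1 ∧ herm (m 2) (m 3) = 1 ∧
               herm (m 0) (m 2) = -(eI α) ∧ herm (m 0) (m 3) = κ₁ ∧
               herm (m 1) (m 3) = κ₂) →
              (D = 0 ↔ ∃ lam : Fin 4 → ℍ[ℝ], lam ≠ 0 ∧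
                  (fun x => ∑ i : Fin 4, m i x * lam i) = 0))) := by
  classical
  have hcos : 0 ≤ Real.cos α :=
    Real.cos_nonneg_of_mem_Icc ⟨by linarith [hα.1, Real.pi_pos], hα.2⟩
  have hA0 : (0:ℝ) ≤ 2*Real.cos α := by linarith
  have hB0 : (0:ℝ) ≤ -2*κ₂.re := by linarith
  have hsame : κ₁ + κ₂ * eI α - 1 = κ₁ - 1 + κ₂ * eI α := by noncomm_ring
  have hDeq : D = Quaternion.normSq (κ₁ + κ₂ * eI α - 1)
      - (2*Real.cos α)*(-2*κ₂.re) := by rw [hD]; exact S18.Dalg α κ₁ κ₂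
  constructor
  · constructor
    · rintro ⟨m, hm0, hnull, h01, h12, h23, h02, h03, h13⟩
      obtain ⟨lam, hlam, hrel⟩ := S18.four_dep m
      have hdep : ∃ lam : Fin 4 → ℍ[ℝ], lam ≠ 0 ∧
          (fun x => ∑ i : Fin 4, m i x * lam i) = 0 := ⟨lam, hlam, funext hrel⟩
      have heq := (S18.quad_eq_iff_dep (n := 2) (by norm_num) m (eI α) κ₁ κ₂ hnull
        h01 h12 h23 h02 h03 h13 (2*Real.cos α) (-2*κ₂.re)
        (S18.eI_fact' α) (S18.kappa_fact' κ₂)).mp hdep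
      rw [hDeq, heq]
      ring
    · intro hD0
      have heq : Quaternion.normSq (κ₁ - 1 + κ₂ * eI α) = (2*Real.cos α) * (-2*κ₂.re) := by
        rw [← hsame]; rw [hDeq] at hD0; linarith
      obtain ⟨x1, y1, hx, hy, hP⟩ := S18.scalars_eq _ _ hA0 hB0 _ heq
      obtain ⟨m, hm0, hnull, h01, h12, h23, h02, h03, h13⟩ :=
        S18.construct2 (eI α) κ₁ κ₂ (2*Real.cos α) (-2*κ₂.re)
          (S18.eI_fact α) (S18.kappa_fact κ₂) x1 y1 hx hy hP
      exact ⟨m, hm0, hnull, h01, h12, h23, h02, h03, h13⟩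
  · intro n hn
    have hn0 : 0 < n := by omega
    refine ⟨⟨?_, ?_⟩, ?_⟩
    · rintro ⟨m, hm0, hnull, h01, h12, h23, h02, h03, h13⟩
      have hle := S18.quad_csq hn0 m (eI α) κ₁ κ₂ hnull h01 h12 h23 h02 h03 h13
        (2*Real.cos α) (-2*κ₂.re) (S18.eI_fact' α) (S18.kappa_fact' κ₂)
      rw [hDeq]
      linarith
    · intro hDle
      have hle : Quaternion.normSq (κ₁ - 1 + κ₂ * eI α) ≤ (2*Real.cos α) * (-2*κ₂.re) := by
        rw [← hsame]; rw [hDeq] at hDle; linarith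
      obtain ⟨x1, x2, y1, y2, hx, hy, hP⟩ := S18.scalars_le _ _ hA0 hB0 _ hle
      obtain ⟨m, hm0, hnull, h01, h12, h23, h02, h03, h13⟩ :=
        S18.constructN hn (eI α) κ₁ κ₂ (2*Real.cos α) (-2*κ₂.re)
          (S18.eI_fact α) (S18.kappa_fact κ₂) x1 x2 y1 y2 hx hy hP
      exact ⟨m, hm0, hnull, h01, h12, h23, h02, h03, h13⟩
    · rintro m ⟨hm0, hnull, h01, h12, h23, h02, h03, h13⟩
      have hiff := S18.quad_eq_iff_dep hn0 m (eI α) κ₁ κ₂ hnull h01 h12 h23 h02 h03 h13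
        (2*Real.cos α) (-2*κ₂.re) (S18.eI_fact' α) (S18.kappa_fact' κ₂)
      constructor
      · intro hD0
        exact hiff.mpr (by rw [hDeq] at hD0; linarith)
      · intro hdep
        have := hiff.mp hdep
        rw [hDeq, this]
        ring
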